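/- Let r(n) be defined by r(1)=r(2)=0 and, for n ≥ 3, r(n) = max over 1 ≤ i ≤ n/2 of (2i - 1 - [i = n/2] + r(i) + r(n-i)), where [i=n/2] is 1 if i = n/2 and 0 otherwise. Then r(n) ≤ n·log₂(n) for all n ≥ 1. -/
import Mathlib

lemma expA (x : ℝ) (h0 : 0 ≤ x) (h1 : x ≤ 1) : Real.exp (x * Real.log 2) ≤ 1 + x := by
  have h := convexOn_exp.2 (Set.mem_univ (0:ℝ)) (Set.mem_univ (Real.log 2))
    (by linarith : (0:ℝ) ≤ 1 - x) h0 (by ring)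
  simp only [smul_eq_mul, mul_zero, zero_add, Real.exp_zero] at h
  rw [Real.exp_log (by norm_num : (0:ℝ) < 2)] at h
  linarith

lemma logbA (x : ℝ) (h0 : 0 ≤ x) (h1 : x ≤ 1) : x ≤ Real.logb 2 (1 + x) := by
  have h2 : (0:ℝ) < Real.log 2 := Real.log_pos (by norm_num)
  rw [Real.logb, le_div_iff₀ h2]
  have := expA x h0 h1
  have h3 : x * Real.log 2 ≤ Real.log (1 + x) := by
    rw [← Real.log_exp (x * Real.log 2)]
    exact Real.log_le_log (Real.exp_pos _) this
  linarith

lemma keyB (i j : ℝ) (hi : 1 ≤ i) (hij : i ≤ j) :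
    2 * i + i * Real.logb 2 i + j * Real.logb 2 j ≤ (i + j) * Real.logb 2 (i + j) := by
  have hi0 : (0:ℝ) < i := by linarith
  have hj0 : (0:ℝ) < j := by linarith
  have hb : (1:ℝ) < 2 := by norm_num
  -- part 1 : 1 + logb 2 i ≤ logb 2 (i+j)
  have p1 : 1 + Real.logb 2 i ≤ Real.logb 2 (i + j) := by
    have : Real.logb 2 (2 * i) ≤ Real.logb 2 (i + j) :=
      Real.logb_le_logb_of_le (by norm_num) (by positivity) (by linarith)
    rwa [Real.logb_mul (by norm_num) (ne_of_gt hi0), Real.logb_self_eq_one (by norm_num)] at this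
  -- part 2 : logb 2 j + i/j ≤ logb 2 (i+j)
  have p2 : Real.logb 2 j + i / j ≤ Real.logb 2 (i + j) := by
    have hx0 : 0 ≤ i / j := by positivity
    have hx1 : i / j ≤ 1 := (div_le_one hj0).mpr hij
    have := logbA (i / j) hx0 hx1
    have heq : i + j = j * (1 + i / j) := by field_simp; ring
    rw [heq, Real.logb_mul (ne_of_gt hj0) (by positivity)]
    linarith
  have q1 : i * (1 + Real.logb 2 i) ≤ i * Real.logb 2 (i + j) :=
    mul_le_mul_of_nonneg_left p1 (le_of_lt hi0)
  have q2 : j * (Real.logb 2 j + i / j) ≤ j * Real.logb 2 (i + j) :=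
    mul_le_mul_of_nonneg_left p2 (le_of_lt hj0)
  have hjd : j * (i / j) = i := by field_simp
  nlinarith [q1, q2]

/-- r(1)=r(2)=0 and r(n) = max_{1 ≤ i ≤ n/2} (2i - 1 - [i = n/2] + r(i) + r(n-i)). -/
def rr : ℕ → ℕ
  | 0 => 0
  | 1 => 0
  | 2 => 0
  | n + 3 =>
    (Finset.Icc 1 ((n + 3) / 2)).attach.sup fun i =>
      2 * i.1 - 1 - (if 2 * i.1 = n + 3 then 1 else 0) + rr i.1 + rr (n + 3 - i.1)
  termination_by n => n
  decreasing_by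
  · have := Finset.mem_Icc.mp i.2; omega
  · have := Finset.mem_Icc.mp i.2; omega

/-- r(n) ≤ n · log₂ n for all n ≥ 1. -/
theorem stmt15 (n : ℕ) (hn : 1 ≤ n) : (rr n : ℝ) ≤ n * Real.logb 2 n := by
  induction n using Nat.strong_induction_on with
  | _ n IH =>
    match n, hn with
    | 1, _ => simp [rr]
    | 2, _ =>
      have : Real.logb 2 2 = 1 := Real.logb_self_eq_one (by norm_num)
      simp [rr, this]
    | (m + 3), _ =>
      set N := m + 3 with hN
      have hne : ((Finset.Icc 1 (N / 2)).attach).Nonempty := by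
        rw [Finset.attach_nonempty_iff, Finset.nonempty_Icc]
        omega
      obtain ⟨a, _, ha⟩ := Finset.exists_mem_eq_sup _ hne
        (fun i : {x // x ∈ Finset.Icc 1 (N / 2)} =>
          2 * i.1 - 1 - (if 2 * i.1 = N then 1 else 0) + rr i.1 + rr (N - i.1))
      have hrr : rr N = 2 * a.1 - 1 - (if 2 * a.1 = N then 1 else 0) + rr a.1 + rr (N - a.1) := by
        conv_lhs => rw [hN, rr]
        exact ha
      obtain ⟨ha1, ha2⟩ := Finset.mem_Icc.mp a.2
      set k := a.1
      set j := N - k with hj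
      have hk1 : 1 ≤ k := ha1
      have hkj : k ≤ j := by omega
      have hj1 : 1 ≤ j := by omega
      have hkN : k < N := by omega
      have hjN : j < N := by omega
      have IHk : (rr k : ℝ) ≤ k * Real.logb 2 k := IH k hkN hk1
      have IHj : (rr j : ℝ) ≤ j * Real.logb 2 j := IH j hjN hj1
      have hkey := keyB (k : ℝ) (j : ℝ) (by exact_mod_cast hk1) (by exact_mod_cast hkj)
      have hsum : (k : ℝ) + j = N := by
        have : k + j = N := by omega
        exact_mod_cast this
      have hcast : (rr N : ℝ) ≤ 2 * (k : ℝ) + rr k + rr j := by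
        rw [hrr]
        push_cast
        have : (↑(2 * k - 1 - (if 2 * k = N then 1 else 0)) : ℝ) ≤ 2 * k := by
          have : 2 * k - 1 - (if 2 * k = N then 1 else 0) ≤ 2 * k := by omega
          exact_mod_cast this
        linarith
      rw [← hsum] at *
      linarith
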